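/- Let d ≥ 2 and n ≥ 1 be integers and set δ := 1/(n+2). Then the base S^{n+δ}_1 := {x ∈ S^{n+δ} : 0 ≤ x_d ≤ 1+δ} of the right d-simplex S^{n+δ} = {x ∈ ℝ^d : n+δ ≥ x_1 ≥ x_2 ≥ … ≥ x_d ≥ 0} can be covered by (n+1)^d − n^d unit right d-simplices; that is, there exist N := (n+1)^d − n^d pairs (v_i, π_i) with v_i ∈ ℝ^d and π_i a permutation of {1,…,d} such that S^{n+δ}_1 ⊆ ⋃_{i=1}^N k(v_i, π_i). -/
import Mathlib


/-- The right `d`-simplex `S^α = {x ∈ ℝ^d : α ≥ x_1 ≥ x_2 ≥ … ≥ x_d ≥ 0}`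
(coordinates indexed by `Fin d`, in order). -/
def Sset (d : ℕ) (α : ℝ) : Set (Fin d → ℝ) :=
  {x | (∀ i : Fin d, 0 ≤ x i ∧ x i ≤ α) ∧ ∀ i j : Fin d, i ≤ j → x j ≤ x i}

/-- The Kuhn simplex `k(v,π) = {x : 1 ≥ (x−v)_{π(1)} ≥ … ≥ (x−v)_{π(d)} ≥ 0}`. -/
def kuhn (d : ℕ) (v : Fin d → ℝ) (π : Equiv.Perm (Fin d)) : Set (Fin d → ℝ) :=
  {x | (∀ i : Fin d, 0 ≤ x (π i) - v (π i) ∧ x (π i) - v (π i) ≤ 1) ∧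
       ∀ i j : Fin d, i ≤ j → x (π j) - v (π j) ≤ x (π i) - v (π i)}

/-- `(v,π)` with `v ∈ ℤ^d` is admissible for `m` if `v ∈ S^{m-1}` and whenever
`v_j = v_{j+1}`, `j` precedes `j+1` in `π`, i.e. `π⁻¹(j) < π⁻¹(j+1)`. -/
def admissible (d m : ℕ) (v : Fin d → ℤ) (π : Equiv.Perm (Fin d)) : Prop :=
  ((fun i => (v i : ℝ)) ∈ Sset d ((m : ℝ) - 1)) ∧
  ∀ (j : Fin d) (h : (j : ℕ) + 1 < d),
    v j = v ⟨(j : ℕ) + 1, h⟩ → π.symm j < π.symm ⟨(j : ℕ) + 1, h⟩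

namespace BaseCoverAux

/-- The left endpoint of the `k`-th "cell" (interval of length 1). -/
noncomputable def ccell (δ : ℝ) : ℕ → ℝ :=
  fun k => if k = 0 then 0 else ((k : ℝ) + 1) * (1 - δ) - 1

lemma ccell_zero (δ : ℝ) : ccell δ 0 = 0 := if_pos rfl

lemma ccell_of_ne (δ : ℝ) {k : ℕ} (hk : k ≠ 0) :
    ccell δ k = ((k : ℝ) + 1) * (1 - δ) - 1 := if_neg hk

lemma ccell_nonneg {δ : ℝ} (hδ : 2 * δ ≤ 1) (k : ℕ) : 0 ≤ ccell δ k := by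
  rcases Nat.eq_zero_or_pos k with h | h
  · simp [h, ccell_zero]
  · rw [ccell_of_ne δ (by omega)]
    have h1 : (1 : ℝ) ≤ (k : ℝ) := by exact_mod_cast h
    nlinarith

lemma ccell_step {δ : ℝ} (hδ0 : 0 ≤ δ) (k : ℕ) :
    ccell δ (k + 1) ≤ ccell δ k + 1 := by
  rcases Nat.eq_zero_or_pos k with h | h
  · subst h
    rw [ccell_of_ne δ (by omega), ccell_zero]
    push_cast; nlinarith
  · rw [ccell_of_ne δ (by omega), ccell_of_ne δ (by omega)]
    push_cast; nlinarith

lemma ccell_succ_diff {δ : ℝ} {k : ℕ} (hk : k ≠ 0) :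
    ccell δ (k + 1) = ccell δ k + (1 - δ) := by
  rw [ccell_of_ne δ (by omega), ccell_of_ne δ hk]
  push_cast; ring

lemma ccell_mono {δ : ℝ} (hδ0 : 0 ≤ δ) (hδ : 2 * δ ≤ 1) {k l : ℕ} (hkl : k ≤ l) :
    ccell δ k ≤ ccell δ l := by
  rcases Nat.eq_zero_or_pos k with h | h
  · simp only [h, ccell_zero]
    exact ccell_nonneg hδ l
  · rw [ccell_of_ne δ (by omega), ccell_of_ne δ (by omega)]
    have h1 : (k : ℝ) ≤ (l : ℝ) := by exact_mod_cast hkl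
    have h2 : (0:ℝ) ≤ 1 - δ := by linarith
    nlinarith

/-- The sorting permutation attached to a family index `F`. -/
def sigF {d n : ℕ} (F : Fin d → Fin (n + 1)) : Equiv.Perm (Fin d) :=
  Tuple.sort (fun i => n - (F i : ℕ))

/-- The vertex of the Kuhn simplex attached to a family index `F`. -/
noncomputable def vertF {m n : ℕ} (δ : ℝ) (F : Fin (m + 2) → Fin (n + 1)) :
    Fin (m + 2) → ℝ :=
  fun j => ccell δ (F (sigF F j) : ℕ) +
    (if sigF F (Fin.last (m + 1)) = Fin.last (m + 1) then 0 else δ)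

lemma card_aux (d n : ℕ) :
    Fintype.card {F : Fin d → Fin (n + 1) // ∃ i, F i = 0} = (n + 1) ^ d - n ^ d := by
  classical
  have h1 : Fintype.card {F : Fin d → Fin (n + 1) // ¬ ∃ i, F i = 0} = n ^ d := by
    have e : {F : Fin d → Fin (n + 1) // ¬ ∃ i, F i = 0}
        ≃ (Fin d → {y : Fin (n + 1) // ¬ y = 0}) :=
      (Equiv.subtypeEquivRight (fun F => by push_neg; rfl)).trans Equiv.subtypePiEquivPi
    rw [Fintype.card_congr e, Fintype.card_fun]
    have h2 : Fintype.card {y : Fin (n + 1) // ¬ y = 0} = n := by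
      rw [Fintype.card_subtype_compl, Fintype.card_subtype_eq, Fintype.card_fin]
      omega
    rw [h2, Fintype.card_fin]
  have h4 : Fintype.card (Fin d → Fin (n + 1)) = (n + 1) ^ d := by
    rw [Fintype.card_fun, Fintype.card_fin, Fintype.card_fin]
  have h3 : Fintype.card {F : Fin d → Fin (n + 1) // ∃ i, F i = 0}
      ≤ (n + 1) ^ d := h4 ▸ Fintype.card_subtype_le _
  have h2 : Fintype.card {F : Fin d → Fin (n + 1) // ¬ ∃ i, F i = 0}
      = (n + 1) ^ d - Fintype.card {F : Fin d → Fin (n + 1) // ∃ i, F i = 0} := by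
    rw [Fintype.card_subtype_compl, h4]
  rw [h1] at h2
  set X := Fintype.card {F : Fin d → Fin (n + 1) // ∃ i, F i = 0} with hX
  clear_value X
  clear hX h1 h4
  omega

lemma mem_family {m n : ℕ} (δ : ℝ) (x : Fin (m + 2) → ℝ)
    (hmono : ∀ i j : Fin (m + 2), i ≤ j → x j ≤ x i)
    (w : Fin (m + 2) → ℕ) (s : ℝ)
    (hwn : ∀ j, w j ≤ n)
    (hwa : ∀ i j : Fin (m + 2), i ≤ j → w j ≤ w i)
    (hw0 : w (Fin.last (m + 1)) = 0)
    (hlb : ∀ j, ccell δ (w j) + s ≤ x j)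
    (hub : ∀ j, x j ≤ ccell δ (w j) + s + 1)
    (hcase : (s = 0 ∧ ∀ j, x (Fin.last (m + 1)) - (ccell δ (w (Fin.last (m + 1))) + s)
                 ≤ x j - (ccell δ (w j) + s))
      ∨ (s = δ ∧ ∃ j, j ≠ Fin.last (m + 1) ∧
          x j - (ccell δ (w j) + s)
            < x (Fin.last (m + 1)) - (ccell δ (w (Fin.last (m + 1))) + s))) :
    ∃ F : Fin (m + 2) → Fin (n + 1), (∃ i, F i = 0) ∧
      x ∈ kuhn (m + 2) (vertF δ F) (sigF F).symm := by
  classical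
  set L : Fin (m + 2) := Fin.last (m + 1) with hLdef
  set t : Fin (m + 2) → ℝ := fun j => x j - (ccell δ (w j) + s) with htdef
  set π : Equiv.Perm (Fin (m + 2)) := Tuple.sort (fun j => -(t j)) with hπdef
  obtain ⟨hmon, htie⟩ := Tuple.eq_sort_iff.mp hπdef
  have htmono : ∀ a b : Fin (m + 2), a ≤ b → t (π b) ≤ t (π a) := by
    intro a b hab
    have h := hmon hab
    simp only [Function.comp_apply, neg_le_neg_iff] at h
    exact h
  have tie_full : ∀ p q : Fin (m + 2), p < q → w p = w q → π.symm p < π.symm q := by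
    intro p q hpq hwpq
    have hxpq : t q ≤ t p := by
      have h1 : x q ≤ x p := hmono _ _ hpq.le
      simp only [htdef]
      rw [hwpq]
      linarith
    rcases lt_trichotomy (π.symm p) (π.symm q) with h | h | h
    · exact h
    · exact absurd (π.symm.injective h) hpq.ne
    · exfalso
      have h2 : t (π (π.symm p)) ≤ t (π (π.symm q)) := htmono _ _ h.le
      rw [Equiv.apply_symm_apply, Equiv.apply_symm_apply] at h2
      have heq : t p = t q := le_antisymm h2 hxpq
      have h3 := htie (π.symm q) (π.symm p) h (by
        rw [Equiv.apply_symm_apply, Equiv.apply_symm_apply, heq])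
      rw [Equiv.apply_symm_apply, Equiv.apply_symm_apply] at h3
      exact absurd h3 (not_lt.mpr hpq.le)
  set F : Fin (m + 2) → Fin (n + 1) :=
    fun a => ⟨w (π a), Nat.lt_succ_of_le (hwn _)⟩ with hFdef
  have hFsymm : ∀ a, ((F (π.symm a) : ℕ)) = w a := by
    intro a
    simp only [hFdef]
    rw [Equiv.apply_symm_apply]
  have hσ : sigF F = π.symm := by
    refine ((Tuple.eq_sort_iff (σ := π.symm) (f := fun i => n - (F i : ℕ))).mpr
      ⟨?_, ?_⟩).symm
    · intro a b hab
      simp only [Function.comp_apply, hFdef, Equiv.apply_symm_apply]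
      exact Nat.sub_le_sub_left (hwa a b hab) n
    · intro a b hab heq
      simp only [hFdef, Equiv.apply_symm_apply] at heq
      have hwab : w a = w b := by
        have := hwn a; have := hwn b; omega
      exact tie_full a b hab hwab
  have hflag : (if sigF F L = L then (0 : ℝ) else δ) = s := by
    rw [hσ]
    rcases hcase with ⟨hs, hall⟩ | ⟨hs, j0, hj0ne, hj0⟩
    · have hfix : π.symm L = L := by
        by_contra hne
        have haL : π.symm L < L := lt_of_le_of_ne (Fin.le_last _) hne
        have h1 : t (π L) ≤ t (π (π.symm L)) := htmono _ _ (Fin.le_last _)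
        rw [Equiv.apply_symm_apply] at h1
        have h2 : t L ≤ t (π L) := hall (π L)
        have heq : t (π (π.symm L)) = t (π L) := by
          rw [Equiv.apply_symm_apply]; exact le_antisymm h2 h1
        have h3 := htie (π.symm L) L haL (by rw [heq])
        rw [Equiv.apply_symm_apply] at h3
        exact absurd h3 (not_lt.mpr (Fin.le_last _))
      rw [if_pos hfix]; exact hs.symm
    · have hfix : π.symm L ≠ L := by
        intro h
        have hL : π L = L := by
          have h2 := congrArg π h
          rw [Equiv.apply_symm_apply] at h2
          exact h2.symm
        have h1 : t (π L) ≤ t (π (π.symm j0)) := htmono _ _ (Fin.le_last _)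
        rw [Equiv.apply_symm_apply, hL] at h1
        exact absurd hj0 (not_lt.mpr h1)
      rw [if_neg hfix]; exact hs.symm
  have hvert : ∀ j, vertF δ F j = ccell δ (w j) + s := by
    intro j
    unfold vertF
    rw [← hLdef, hflag, hσ, hFsymm]
  refine ⟨F, ⟨π.symm L, ?_⟩, ?_, ?_⟩
  · apply Fin.ext
    have h1 := hFsymm L
    rw [hw0] at h1
    rw [Fin.val_zero]
    exact h1
  · intro a
    have hperm : (sigF F).symm a = π a := by rw [hσ, Equiv.symm_symm]
    rw [hperm, hvert]
    constructor
    · have := hlb (π a); linarith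
    · have := hub (π a); linarith
  · intro a b hab
    have hpa : (sigF F).symm a = π a := by rw [hσ, Equiv.symm_symm]
    have hpb : (sigF F).symm b = π b := by rw [hσ, Equiv.symm_symm]
    rw [hpa, hpb, hvert, hvert]
    exact htmono a b hab

lemma construct {m n : ℕ} (hn : 1 ≤ n) (δ : ℝ) (hδ : δ = ((n : ℝ) + 2)⁻¹)
    (x : Fin (m + 2) → ℝ)
    (hb : ∀ i, 0 ≤ x i ∧ x i ≤ (n : ℝ) + δ)
    (hmono : ∀ i j : Fin (m + 2), i ≤ j → x j ≤ x i)
    (hL1 : x (Fin.last (m + 1)) ≤ 1 + δ) :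
    ∃ (w : Fin (m + 2) → ℕ) (s : ℝ), (∀ j, w j ≤ n) ∧
      (∀ i j : Fin (m + 2), i ≤ j → w j ≤ w i) ∧
      w (Fin.last (m + 1)) = 0 ∧
      (∀ j, ccell δ (w j) + s ≤ x j) ∧ (∀ j, x j ≤ ccell δ (w j) + s + 1) ∧
      ((s = 0 ∧ ∀ j, x (Fin.last (m + 1)) - (ccell δ (w (Fin.last (m + 1))) + s)
          ≤ x j - (ccell δ (w j) + s))
        ∨ (s = δ ∧ ∃ j, j ≠ Fin.last (m + 1) ∧
            x j - (ccell δ (w j) + s)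
              < x (Fin.last (m + 1)) - (ccell δ (w (Fin.last (m + 1))) + s))) := by
  classical
  set L : Fin (m + 2) := Fin.last (m + 1) with hLdef
  have hn1 : (1 : ℝ) ≤ (n : ℝ) := by exact_mod_cast hn
  have hpos : (0 : ℝ) < (n : ℝ) + 2 := by linarith
  have hδ0 : 0 < δ := by rw [hδ]; positivity
  have hkey : ((n : ℝ) + 2) * δ = 1 := by
    rw [hδ]; field_simp
  have hδ3 : 3 * δ ≤ 1 := by nlinarith
  have hδhalf : 2 * δ ≤ 1 := by linarith
  have hβ : (0 : ℝ) < 1 - δ := by linarith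
  have htop : ((n : ℝ) + 1) * (1 - δ) = (n : ℝ) + δ := by nlinarith
  -- the case-A cell assignment
  set A : ℝ → ℕ := fun y => if y ≤ 1 then 0 else ⌈y / (1 - δ)⌉₊ - 1 with hAdef
  have hA0 : ∀ y : ℝ, y ≤ 1 → A y = 0 := fun y hy => if_pos hy
  have hAn : ∀ y : ℝ, y ≤ (n : ℝ) + δ → A y ≤ n := by
    intro y hy
    simp only [hAdef]
    split
    · exact Nat.zero_le n
    · have h1 : ⌈y / (1 - δ)⌉₊ ≤ n + 1 := by
        rw [Nat.ceil_le, div_le_iff₀ hβ]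
        push_cast
        nlinarith
      omega
  have hApos : ∀ y : ℝ, 1 < y → 1 ≤ A y := by
    intro y hy
    simp only [hAdef]
    rw [if_neg (not_le.mpr hy)]
    have h1 : 1 < ⌈y / (1 - δ)⌉₊ := by
      rw [Nat.lt_ceil, lt_div_iff₀ hβ]
      push_cast
      nlinarith
    omega
  have hAcast : ∀ y : ℝ, 1 < y → ((A y : ℝ) + 1) = (⌈y / (1 - δ)⌉₊ : ℝ) := by
    intro y hy
    have h1 : 1 ≤ A y := hApos y hy
    have h2 : A y = ⌈y / (1 - δ)⌉₊ - 1 := by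
      simp only [hAdef]; rw [if_neg (not_le.mpr hy)]
    have hM : 1 ≤ ⌈y / (1 - δ)⌉₊ := by omega
    rw [h2]
    push_cast [Nat.cast_sub hM]
    ring
  have hAlb : ∀ y : ℝ, 1 < y → ccell δ (A y) + δ < y := by
    intro y hy
    have h1 : 1 ≤ A y := hApos y hy
    have hceil : (⌈y / (1 - δ)⌉₊ : ℝ) < y / (1 - δ) + 1 :=
      Nat.ceil_lt_add_one (by positivity)
    rw [ccell_of_ne δ (by omega), hAcast y hy]
    have h3 : (⌈y / (1 - δ)⌉₊ : ℝ) * (1 - δ) < (y / (1 - δ) + 1) * (1 - δ) :=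
      mul_lt_mul_of_pos_right hceil hβ
    rw [add_mul, div_mul_cancel₀ _ (ne_of_gt hβ)] at h3
    linarith
  have hAub : ∀ y : ℝ, 0 ≤ y → y ≤ ccell δ (A y) + 1 := by
    intro y hy0
    by_cases hy : y ≤ 1
    · rw [hA0 y hy, ccell_zero]; linarith
    · push_neg at hy
      have h1 : 1 ≤ A y := hApos y hy
      rw [ccell_of_ne δ (by omega), hAcast y hy]
      have hceil : y / (1 - δ) ≤ (⌈y / (1 - δ)⌉₊ : ℝ) := Nat.le_ceil _
      have h3 : y / (1 - δ) * (1 - δ) ≤ (⌈y / (1 - δ)⌉₊ : ℝ) * (1 - δ) :=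
        mul_le_mul_of_nonneg_right hceil hβ.le
      rw [div_mul_cancel₀ _ (ne_of_gt hβ)] at h3
      linarith
  have hAmono : ∀ y z : ℝ, y ≤ z → A y ≤ A z := by
    intro y z hyz
    by_cases hy : y ≤ 1
    · rw [hA0 y hy]; exact Nat.zero_le _
    · push_neg at hy
      have hz : ¬ z ≤ 1 := by push_neg; linarith
      simp only [hAdef]
      rw [if_neg (not_le.mpr hy), if_neg hz]
      have h1 : ⌈y / (1 - δ)⌉₊ ≤ ⌈z / (1 - δ)⌉₊ :=
        Nat.ceil_le_ceil (by gcongr)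
      omega
  -- the case-B cell assignment
  set Bf : ℝ → ℕ := fun y => min n (⌊(y - δ + 1) / (1 - δ)⌋₊ - 1) with hBdef
  have hBfl1 : ∀ y : ℝ, δ ≤ y → 1 ≤ ⌊(y - δ + 1) / (1 - δ)⌋₊ := by
    intro y hy
    apply Nat.le_floor
    rw [le_div_iff₀ hβ]
    push_cast
    linarith
  have hBn : ∀ y : ℝ, Bf y ≤ n := fun y => min_le_left _ _
  have hBlb : ∀ y : ℝ, δ ≤ y → ccell δ (Bf y) ≤ y - δ := by
    intro y hy
    rcases Nat.eq_zero_or_pos (Bf y) with h | h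
    · rw [h, ccell_zero]; linarith
    · have h1 : Bf y + 1 ≤ ⌊(y - δ + 1) / (1 - δ)⌋₊ := by
        have h0 := min_le_right n (⌊(y - δ + 1) / (1 - δ)⌋₊ - 1)
        simp only [hBdef] at h ⊢
        omega
      have h2 : ((Bf y : ℝ) + 1) ≤ (⌊(y - δ + 1) / (1 - δ)⌋₊ : ℝ) := by
        exact_mod_cast h1
      have h3 : (⌊(y - δ + 1) / (1 - δ)⌋₊ : ℝ) ≤ (y - δ + 1) / (1 - δ) :=
        Nat.floor_le (by apply div_nonneg _ hβ.le; linarith)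
      have h4 : ((Bf y : ℝ) + 1) * (1 - δ) ≤ (y - δ + 1) / (1 - δ) * (1 - δ) :=
        mul_le_mul_of_nonneg_right (le_trans h2 h3) hβ.le
      rw [div_mul_cancel₀ _ (ne_of_gt hβ)] at h4
      rw [ccell_of_ne δ (by omega)]
      linarith
  have hBub : ∀ y : ℝ, δ ≤ y → y ≤ (n : ℝ) + δ →
      y - δ ≤ ccell δ (Bf y) + 1 ∧ y - δ - ccell δ (Bf y) ≤ 1 - δ := by
    intro y hy hyn
    have hM1 : 1 ≤ ⌊(y - δ + 1) / (1 - δ)⌋₊ := hBfl1 y hy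
    by_cases hc : n ≤ ⌊(y - δ + 1) / (1 - δ)⌋₊ - 1
    · have hBfy : Bf y = n := by
        simp only [hBdef]
        exact min_eq_left hc
      rw [hBfy, ccell_of_ne δ (by omega), htop]
      constructor <;> linarith
    · push_neg at hc
      have hBfy : Bf y = ⌊(y - δ + 1) / (1 - δ)⌋₊ - 1 := by
        simp only [hBdef]
        exact min_eq_right (by omega)
      have hMc : Bf y + 1 = ⌊(y - δ + 1) / (1 - δ)⌋₊ := by omega
      have hfl : (y - δ + 1) / (1 - δ) < (⌊(y - δ + 1) / (1 - δ)⌋₊ : ℝ) + 1 :=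
        Nat.lt_floor_add_one _
      have h5 : y - δ + 1 < ((⌊(y - δ + 1) / (1 - δ)⌋₊ : ℝ) + 1) * (1 - δ) := by
        have h5a := mul_lt_mul_of_pos_right hfl hβ
        rwa [div_mul_cancel₀ _ (ne_of_gt hβ)] at h5a
      have h6 : y - δ < ccell δ (Bf y + 1) := by
        rw [ccell_of_ne δ (by omega)]
        push_cast
        have hMcR : ((Bf y : ℝ)) + 1 = (⌊(y - δ + 1) / (1 - δ)⌋₊ : ℝ) := by
          exact_mod_cast hMc
        rw [hMcR]
        linarith
      constructor
      · have := ccell_step (δ := δ) hδ0.le (Bf y)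
        linarith
      · rcases Nat.eq_zero_or_pos (Bf y) with h0 | h0
        · have h7 : ccell δ (Bf y + 1) = 2 * (1 - δ) - 1 := by
            rw [h0, ccell_of_ne δ (by norm_num)]
            push_cast
            ring
          rw [h7] at h6
          rw [h0, ccell_zero]
          linarith
        · have hdiff := ccell_succ_diff (δ := δ) (k := Bf y) (by omega)
          linarith
  have hBmono : ∀ y z : ℝ, y ≤ z → Bf y ≤ Bf z := by
    intro y z hyz
    have h1 : ⌊(y - δ + 1) / (1 - δ)⌋₊ ≤ ⌊(z - δ + 1) / (1 - δ)⌋₊ := by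
      apply Nat.floor_le_floor
      have h0 : y - δ + 1 ≤ z - δ + 1 := by linarith
      gcongr
    simp only [hBdef]
    omega
  have hBge : ∀ y : ℝ, 1 < y → y ≤ (n : ℝ) + δ → A y ≤ Bf y := by
    intro y hy hyn
    have h1 : 1 ≤ A y := hApos y hy
    have h2 : ccell δ (A y) ≤ y - δ := by
      have := hAlb y hy; linarith
    rw [ccell_of_ne δ (by omega)] at h2
    have h3 : ((A y : ℝ) + 1) ≤ (y - δ + 1) / (1 - δ) := by
      rw [le_div_iff₀ hβ]
      linarith
    have h4 : A y + 1 ≤ ⌊(y - δ + 1) / (1 - δ)⌋₊ := by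
      apply Nat.le_floor
      push_cast
      exact h3
    have h5 : A y ≤ n := hAn y hyn
    simp only [hBdef]
    omega
  -- case split
  by_cases hA : x L ≤ 1 ∧ ∀ j, x L ≤ x j - ccell δ (A (x j))
  · -- Case A
    refine ⟨fun j => A (x j), 0, ?_, ?_, ?_, ?_, ?_, Or.inl ⟨rfl, ?_⟩⟩
    · intro j; exact hAn (x j) (hb j).2
    · intro i j hij; exact hAmono (x j) (x i) (hmono i j hij)
    · exact hA0 (x L) hA.1
    · intro j
      dsimp only
      have h1 := hA.2 j
      have h2 := (hb L).1
      linarith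
    · intro j
      dsimp only
      have h1 := hAub (x j) (hb j).1
      linarith
    · intro j
      dsimp only
      have h1 := hA.2 j
      have h2 : ccell δ (A (x L)) = 0 := by rw [hA0 (x L) hA.1, ccell_zero]
      rw [h2]
      linarith
  · -- Case B
    have hwitness : ∃ j0 : Fin (m + 2), j0 ≠ L ∧ δ < x L ∧
        x j0 - δ - ccell δ (Bf (x j0)) < x L - δ := by
      by_cases hxL : 1 < x L
      · refine ⟨0, ?_, by linarith, ?_⟩
        · intro h0
          have : (0 : ℕ) = m + 1 := congrArg Fin.val h0
          omega
        · have hx0 : δ ≤ x 0 := by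
            have := hmono 0 L (Fin.le_last _)
            linarith
          have := (hBub (x 0) hx0 (hb 0).2).2
          linarith
      · push_neg at hxL
        have hA2 : ∃ j, x j - ccell δ (A (x j)) < x L := by
          by_contra hcon
          push_neg at hcon
          exact hA ⟨hxL, hcon⟩
        obtain ⟨jw, hjw⟩ := hA2
        have hxLjw : x L ≤ x jw := hmono jw L (Fin.le_last _)
        have hjw1 : 1 < x jw := by
          by_contra hcon
          push_neg at hcon
          rw [hA0 (x jw) hcon, ccell_zero] at hjw
          linarith
        have hAp : 1 ≤ A (x jw) := hApos (x jw) hjw1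
        have hlbw : ccell δ (A (x jw)) + δ < x jw := hAlb (x jw) hjw1
        have hδL : δ < x L := by linarith
        have hjwL : jw ≠ L := by
          intro h
          rw [h] at hjw1
          linarith
        refine ⟨jw, hjwL, hδL, ?_⟩
        have hge : A (x jw) ≤ Bf (x jw) := hBge (x jw) hjw1 (hb jw).2
        rcases eq_or_lt_of_le hge with heq | hlt
        · rw [← heq]
          linarith
        · have h1 : ccell δ (A (x jw) + 1) ≤ ccell δ (Bf (x jw)) :=
            ccell_mono hδ0.le hδhalf hlt
          have h2 : x jw ≤ ccell δ (A (x jw)) + 1 := hAub (x jw) (hb jw).1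
          have h3 := ccell_succ_diff (δ := δ) (k := A (x jw)) (by omega)
          linarith
    obtain ⟨j0, hj0ne, hδL, hj0t⟩ := hwitness
    have hδle : ∀ j, δ ≤ x j := by
      intro j
      have := hmono j L (Fin.le_last _)
      linarith
    refine ⟨fun j => if j = L then 0 else Bf (x j), δ, ?_, ?_, ?_, ?_, ?_,
      Or.inr ⟨rfl, j0, hj0ne, ?_⟩⟩
    · intro j
      dsimp only
      split
      · exact Nat.zero_le n
      · exact hBn (x j)
    · intro i j hij
      dsimp only
      by_cases hj : j = L
      · rw [if_pos hj]; exact Nat.zero_le _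
      · have hi : i ≠ L := by
          intro h
          apply hj
          have h1 : L ≤ j := by rw [← h]; exact hij
          exact le_antisymm (Fin.le_last _) h1
        rw [if_neg hj, if_neg hi]
        exact hBmono (x j) (x i) (hmono i j hij)
    · exact if_pos rfl
    · intro j
      dsimp only
      by_cases hj : j = L
      · rw [if_pos hj, ccell_zero, hj]
        linarith
      · rw [if_neg hj]
        have h1 := hBlb (x j) (hδle j)
        linarith
    · intro j
      dsimp only
      by_cases hj : j = L
      · rw [if_pos hj, ccell_zero, hj]
        linarith
      · rw [if_neg hj]
        have h1 := (hBub (x j) (hδle j) (hb j).2).1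
        linarith
    · dsimp only
      rw [if_neg hj0ne, if_pos rfl, ccell_zero]
      have h1 : x j0 - (ccell δ (Bf (x j0)) + δ) = x j0 - δ - ccell δ (Bf (x j0)) := by
        ring
      rw [h1]
      linarith

end BaseCoverAux

/-- the base `S^{n+δ}_1 = {x ∈ S^{n+δ} : 0 ≤ x_d ≤ 1+δ}` can be covered by
`(n+1)^d - n^d` unit right `d`-simplices. -/
theorem base_cover (d n : ℕ) (hd : 2 ≤ d) (hn : 1 ≤ n)
    (δ : ℝ) (hδ : δ = ((n : ℝ) + 2)⁻¹) :
    ∃ (v : Fin ((n + 1) ^ d - n ^ d) → (Fin d → ℝ))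
      (π : Fin ((n + 1) ^ d - n ^ d) → Equiv.Perm (Fin d)),
      {x ∈ Sset d ((n : ℝ) + δ) |
          0 ≤ x ⟨d - 1, by omega⟩ ∧ x ⟨d - 1, by omega⟩ ≤ 1 + δ}
        ⊆ ⋃ i, kuhn d (v i) (π i) := by
  classical
  obtain ⟨m, rfl⟩ : ∃ m, d = m + 2 := ⟨d - 2, by omega⟩
  have hLeq : (⟨m + 2 - 1, Nat.sub_lt (Nat.succ_pos _) Nat.one_pos⟩ : Fin (m + 2))
      = Fin.last (m + 1) := rfl
  have hcard := BaseCoverAux.card_aux (m + 2) n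
  let e : Fin ((n + 1) ^ (m + 2) - n ^ (m + 2)) ≃
      {F : Fin (m + 2) → Fin (n + 1) // ∃ i, F i = 0} :=
    (Fintype.equivFinOfCardEq hcard).symm
  refine ⟨fun i => BaseCoverAux.vertF δ (e i).1,
    fun i => (BaseCoverAux.sigF (e i).1).symm, ?_⟩
  rintro x ⟨⟨hb, hmono⟩, hx0, hx1⟩
  rw [hLeq] at hx1
  obtain ⟨w, s, hwn, hwa, hw0, hlb, hub, hcase⟩ :=
    BaseCoverAux.construct hn δ hδ x hb hmono hx1
  obtain ⟨F, hF0, hmem⟩ :=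
    BaseCoverAux.mem_family δ x hmono w s hwn hwa hw0 hlb hub hcase
  apply Set.mem_iUnion.mpr
  refine ⟨e.symm ⟨F, hF0⟩, ?_⟩
  simp only [Equiv.apply_symm_apply]
  exact hmem
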